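/- For every α ≥ 2 and every fixed y ∈ I_α^A, the function x ↦ κ_α^A(x,y) = k_α^A( (k_α^A)^{-1}(x) ∗ (k_α^A)^{-1}(y) ) is convex on I_α^A, and symmetrically it is convex in y for every fixed x ∈ I_α^A. -/

import Mathlib

set_option maxHeartbeats 1000000


open Real

noncomputable section

/-- Binary convolution `a∗b = a(1-b) + (1-a)b`. -/
def bconv (a b : ℝ) : ℝ := a * (1 - b) + (1 - a) * b

/-- Binary Rényi entropy `h_α(p) = (1/(1-α))·log(p^α + (1-p)^α)`. -/
def binH (α p : ℝ) : ℝ := (1 / (1 - α)) * Real.log (p ^ α + (1 - p) ^ α)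

/-- Inverse of `h_α` as a map `[0, log 2] → [0, 1/2]`. -/
def binHInv (α : ℝ) : ℝ → ℝ := Function.invFunOn (binH α) (Set.Icc 0 (1/2))

/-- `k_α^A(p) = (p^α + (1-p)^α)^{1/α}`. -/
def kA (α p : ℝ) : ℝ := (p ^ α + (1 - p) ^ α) ^ (1/α)

/-- Inverse of `k_α^A`, mapping `I_α^A` back to `[0,1/2]`. -/
def kAInv (α : ℝ) : ℝ → ℝ := Function.invFunOn (kA α) (Set.Icc 0 (1/2))

/-- `δ_α^A = 2^{(1-α)/α}`. -/
def deltaA (α : ℝ) : ℝ := (2 : ℝ) ^ ((1 - α)/α)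

/-- The closed interval `I_α^A` with endpoints `1` and `δ_α^A`. -/
def IA (α : ℝ) : Set ℝ := Set.uIcc 1 (deltaA α)

/-- `κ_α^A(x,y) = k_α^A((k_α^A)⁻¹(x) ∗ (k_α^A)⁻¹(y))`. -/
def kkA (α x y : ℝ) : ℝ := kA α (bconv (kAInv α x) (kAInv α y))

/-- `k_α^H(p) = p^α + (1-p)^α`. -/
def kH (α p : ℝ) : ℝ := p ^ α + (1 - p) ^ α

/-- Inverse of `k_α^H`, mapping `I_α^H` back to `[0,1/2]`. -/
def kHInv (α : ℝ) : ℝ → ℝ := Function.invFunOn (kH α) (Set.Icc 0 (1/2))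

/-- `δ_α^H = 2^{1-α}`. -/
def deltaH (α : ℝ) : ℝ := (2 : ℝ) ^ (1 - α)

/-- The closed interval `I_α^H` with endpoints `1` and `δ_α^H`. -/
def IH (α : ℝ) : Set ℝ := Set.uIcc 1 (deltaH α)

/-- `κ_α^H(x,y) = k_α^H((k_α^H)⁻¹(x) ∗ (k_α^H)⁻¹(y))`. -/
def kkH (α x y : ℝ) : ℝ := kH α (bconv (kHInv α x) (kHInv α y))

/-- `ĥ_α(x,y) = h_α(h_α⁻¹(x) ∗ h_α⁻¹(y))`. -/
def hhat (α x y : ℝ) : ℝ := binH α (bconv (binHInv α x) (binHInv α y))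

/-- Marginal on `Y` of a joint pmf. -/
def margY {X Y : Type*} [Fintype X] (p : X → Y → ℝ) (y : Y) : ℝ := ∑ x, p x y

/-- A joint pmf: nonnegative entries summing to one. -/
def IsPmf {X Y : Type*} [Fintype X] [Fintype Y] (p : X → Y → ℝ) : Prop :=
  (∀ x y, 0 ≤ p x y) ∧ ∑ x, ∑ y, p x y = 1

/-- Arimoto conditional Rényi entropy `H_α^A(X|Y)`. -/
def condA (α : ℝ) {X Y : Type*} [Fintype X] [Fintype Y] (p : X → Y → ℝ) : ℝ :=
  (α / (1 - α)) * Real.log (∑ y, margY p y * (∑ x, (p x y / margY p y) ^ α) ^ (1/α))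

/-- Hayashi conditional Rényi entropy `H_α^H(X|Y)`. -/
def condH (α : ℝ) {X Y : Type*} [Fintype X] [Fintype Y] (p : X → Y → ℝ) : ℝ :=
  (1 / (1 - α)) * Real.log (∑ y, ∑ x, margY p y * (p x y / margY p y) ^ α)

/-- Jizba–Arimitsu conditional Rényi entropy `H_α^J(X|Y)`. -/
def condJ (α : ℝ) {X Y : Type*} [Fintype X] [Fintype Y] (p : X → Y → ℝ) : ℝ :=
  (1 / (1 - α)) * (Real.log (∑ x, ∑ y, p x y ^ α) - Real.log (∑ y, margY p y ^ α))

/-- Cachin conditional Rényi entropy `H_α^C(X|Y)`. -/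
def condC (α : ℝ) {X Y : Type*} [Fintype X] [Fintype Y] (p : X → Y → ℝ) : ℝ :=
  (1 / (1 - α)) * ∑ y, margY p y * Real.log (∑ x, (p x y / margY p y) ^ α)

/-- `K_α^A(X|Y) = exp(((1-α)/α)·H_α^A(X|Y))`. -/
def KA (α : ℝ) {X Y : Type*} [Fintype X] [Fintype Y] (p : X → Y → ℝ) : ℝ :=
  Real.exp (((1 - α)/α) * condA α p)

/-- `K_α^H(X|Y) = exp((1-α)·H_α^H(X|Y))`. -/
def KH (α : ℝ) {X Y : Type*} [Fintype X] [Fintype Y] (p : X → Y → ℝ) : ℝ :=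
  Real.exp ((1 - α) * condH α p)

/-- `K_α^J(X|Y) = exp((1-α)·H_α^J(X|Y))`. -/
def KJ (α : ℝ) {X Y : Type*} [Fintype X] [Fintype Y] (p : X → Y → ℝ) : ℝ :=
  Real.exp ((1 - α) * condJ α p)

/-- Joint pmf of `(X₁+X₂, (Y₁,Y₂))` for independent pairs `(X₁,Y₁)`, `(X₂,Y₂)`. -/
def combine {Y1 Y2 : Type*} (p1 : Bool → Y1 → ℝ) (p2 : Bool → Y2 → ℝ) :
    Bool → Y1 × Y2 → ℝ :=
  fun z y => ∑ x : Bool, p1 x y.1 * p2 (Bool.xor x z) y.2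

/-- `k_∞^A(p) = max{p, 1-p}`. -/
def kInf (p : ℝ) : ℝ := max p (1 - p)

/-- Binary min-entropy `h_∞(p) = -log max{p, 1-p}`. -/
def binHInf (p : ℝ) : ℝ := - Real.log (max p (1 - p))

/-- Inverse of the restriction of `h_∞` to `[0,1/2]`. -/
def binHInfInv : ℝ → ℝ := Function.invFunOn binHInf (Set.Icc 0 (1/2))

/-- Conditional min-entropy `H_∞(X|Y)` for binary `X`. -/
def condInf {Y : Type*} [Fintype Y] (p : Bool → Y → ℝ) : ℝ :=
  - Real.log (∑ y, margY p y * max (p false y / margY p y) (p true y / margY p y))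

/-- Unconditional Rényi entropy of a finitely supported distribution. -/
def renyiEnt (α : ℝ) {X : Type*} [Fintype X] (p : X → ℝ) : ℝ :=
  (1 / (1 - α)) * Real.log (∑ x, p x ^ α)

/-- Distribution of the mod-2 sum of two independent binary random variables. -/
def sumDist (p1 p2 : Bool → ℝ) : Bool → ℝ := fun z => ∑ x : Bool, p1 x * p2 (Bool.xor x z)

open Set in
section
open Set

namespace MGL3

/-- Key log bound: `log((1+u)/(1-u)) ≤ 2u/(1-u²)` for `u ∈ [0,1)`. -/
lemma logRatio {u : ℝ} (hu0 : 0 ≤ u) (hu1 : u < 1) :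
    Real.log (1+u) - Real.log (1-u) ≤ 2*u/(1-u^2) := by
  set θ : ℝ → ℝ := fun t => 2*t/(1-t^2) - Real.log (1+t) + Real.log (1-t) with hθ
  have key : ∀ t ∈ Set.Ioo (-1:ℝ) 1, HasDerivAt θ
      ((2*(1-t^2) - 2*t*(-(2*t)))/(1-t^2)^2 - 1/(1+t) + (-1)/(1-t)) t := by
    intro t ht
    have h1 : (0:ℝ) < 1 + t := by linarith [ht.1]
    have h2 : (0:ℝ) < 1 - t := by linarith [ht.2]
    have h3 : (1 - t^2) ≠ 0 := by nlinarith [ht.1, ht.2]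
    have hnum : HasDerivAt (fun t : ℝ => 2*t) 2 t := by
      simpa using (hasDerivAt_id t).const_mul (2:ℝ)
    have hden : HasDerivAt (fun t : ℝ => 1 - t^2) (-(2*t)) t := by
      have := (hasDerivAt_pow 2 t).const_sub (1:ℝ)
      simpa using this
    have d1 := hnum.div hden h3
    have d2 : HasDerivAt (fun t : ℝ => Real.log (1+t)) (1/(1+t)) t := by
      have : HasDerivAt (fun t : ℝ => 1 + t) 1 t := by
        simpa using (hasDerivAt_id t).const_add (1:ℝ)
      simpa using this.log h1.ne'
    have d3 : HasDerivAt (fun t : ℝ => Real.log (1-t)) ((-1)/(1-t)) t := by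
      have : HasDerivAt (fun t : ℝ => 1 - t) (-1) t := by
        simpa using (hasDerivAt_id t).const_sub (1:ℝ)
      simpa using this.log h2.ne'
    exact (d1.sub d2).add d3
  have hmono : MonotoneOn θ (Set.Ico (0:ℝ) 1) := by
    apply monotoneOn_of_deriv_nonneg (convex_Ico 0 1)
    · intro t ht
      have : t ∈ Set.Ioo (-1:ℝ) 1 := ⟨by linarith [ht.1], ht.2⟩
      exact (key t this).continuousAt.continuousWithinAt
    · intro t ht
      rw [interior_Ico] at ht
      have : t ∈ Set.Ioo (-1:ℝ) 1 := ⟨by linarith [ht.1], ht.2⟩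
      exact (key t this).differentiableAt.differentiableWithinAt
    · intro t ht
      rw [interior_Ico] at ht
      have ht' : t ∈ Set.Ioo (-1:ℝ) 1 := ⟨by linarith [ht.1], ht.2⟩
      rw [(key t ht').deriv]
      have h1 : (0:ℝ) < 1 + t := by linarith [ht.1]
      have h2 : (0:ℝ) < 1 - t := by linarith [ht.2]
      have h4 : (0:ℝ) < 1 - t^2 := by nlinarith
      have : (2*(1-t^2) - 2*t*(-(2*t)))/(1-t^2)^2 - 1/(1+t) + (-1)/(1-t)
          = 4*t^2/(1-t^2)^2 := by
        field_simp
        ring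
      rw [this]
      positivity
  have h0 : θ 0 = 0 := by simp [hθ]
  have := hmono (Set.mem_Ico.2 ⟨le_refl 0, by norm_num⟩) (Set.mem_Ico.2 ⟨hu0, hu1⟩) hu0
  rw [h0] at this
  simp only [hθ] at this
  linarith

/-- The central inequality (CI). -/
lemma CI {u β : ℝ} (hu0 : 0 < u) (hu1 : u < 1) (hβ : 3 ≤ β) :
    0 ≤ (1+u)^β * (β*u - 1 - 2*u^2) + (1-u)^β * (β*u + 1 + 2*u^2) := by
  have h1u : (0:ℝ) < 1 + u := by linarith
  have h2u : (0:ℝ) < 1 - u := by linarith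
  have hP : (0:ℝ) < (1+u)^β := rpow_pos_of_pos h1u β
  have hQ : (0:ℝ) < (1-u)^β := rpow_pos_of_pos h2u β
  rcases le_or_gt (1 + 2*u^2) (β*u) with h | h
  · have h2 : (0:ℝ) ≤ β*u + 1 + 2*u^2 := by nlinarith
    have h3 : (0:ℝ) ≤ β*u - 1 - 2*u^2 := by linarith
    positivity
  · -- hard case
    set a : ℝ := 1 + 2*u^2 with ha
    have ha0 : (0:ℝ) < a := by positivity
    have hs : 0 < a - β*u := by linarith
    have h3u : 3*u ≤ β*u := by nlinarith
    have hu2 : u < 1/2 := by nlinarith [mul_pos hu0 hu0]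
    have h4u : (0:ℝ) < 1 - 4*u^2 := by nlinarith
    have h1u2 : (0:ℝ) < 1 - u^2 := by nlinarith
    set L : ℝ := Real.log (1-u) - Real.log (1+u) with hL
    set χ : ℝ → ℝ := fun b => b*L + Real.log (a + b*u) - Real.log (a - b*u) with hχdef
    have hders : ∀ b ∈ Set.Icc (3:ℝ) β, HasDerivAt χ (L + u/(a+b*u) - -u/(a-b*u)) b := by
      intro b hb
      have hb3 := hb.1
      have hbβ := hb.2
      have hapos : (0:ℝ) < a + b*u := by nlinarith
      have hspos : (0:ℝ) < a - b*u := by nlinarith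
      have d1 : HasDerivAt (fun b : ℝ => b * L) L b := by
        simpa using (hasDerivAt_id b).mul_const L
      have d2 : HasDerivAt (fun b : ℝ => Real.log (a + b*u)) (u/(a+b*u)) b := by
        have : HasDerivAt (fun b : ℝ => a + b*u) u b := by
          simpa using ((hasDerivAt_id b).mul_const u).const_add a
        simpa using this.log hapos.ne'
      have d3 : HasDerivAt (fun b : ℝ => Real.log (a - b*u)) (-u/(a-b*u)) b := by
        have : HasDerivAt (fun b : ℝ => a - b*u) (-u) b := by
          simpa using ((hasDerivAt_id b).mul_const u).const_sub a
        simpa using this.log hspos.ne'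
      exact (d1.add d2).sub d3
    have hmono : MonotoneOn χ (Set.Icc (3:ℝ) β) := by
      apply monotoneOn_of_deriv_nonneg (convex_Icc 3 β)
      · intro b hb
        exact (hders b hb).continuousAt.continuousWithinAt
      · intro b hb
        rw [interior_Icc] at hb
        exact (hders b (Set.mem_Icc_of_Ioo hb)).differentiableAt.differentiableWithinAt
      · intro b hb
        rw [interior_Icc] at hb
        have hb' := Set.mem_Icc_of_Ioo hb
        rw [(hders b hb').deriv]
        have hb3 : (3:ℝ) ≤ b := hb'.1
        have hapos : (0:ℝ) < a + b*u := by nlinarith [hb'.1]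
        have hspos : (0:ℝ) < a - b*u := by nlinarith [hb'.2]
        have hsum : 2*u/(1-u^2) ≤ u/(a+b*u) + u/(a-b*u) := by
          rw [div_add_div _ _ hapos.ne' hspos.ne', div_le_div_iff₀ h1u2 (by positivity)]
          have hb9 : 9 ≤ b^2 := by nlinarith
          have hcube : (0:ℝ) ≤ u^3 := by positivity
          have h9 : 9*u^3 ≤ b^2*u^3 := by nlinarith
          have h5 : u^3*u^2 ≤ u^3*1 := by nlinarith [sq_nonneg u]
          rw [ha]
          nlinarith [h9, h5]
        have hlog := logRatio hu0.le hu1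
        have hL' : Real.log (1 - u) - Real.log (1 + u) ≥ -(2*u/(1-u^2)) := by linarith
        simp only [hL]
        have harr : u / (a + b * u) - -u / (a - b * u) = u/(a+b*u) + u/(a-b*u) := by
          ring
        linarith [hsum, hL', harr]
    have h3s : (0:ℝ) < a - 3*u := by nlinarith
    have ha3 : (0:ℝ) < a + 3*u := by nlinarith
    have hpoly : (a - 3*u) * (1+u)^(3:ℕ) ≤ (a + 3*u) * (1-u)^(3:ℕ) := by
      have : (a + 3*u) * (1-u)^(3:ℕ) - (a - 3*u) * (1+u)^(3:ℕ) = 4*u^3*(1-u^2) := by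
        rw [ha]; ring
      nlinarith [mul_pos (mul_pos hu0 hu0) hu0]
    have hχ3 : 0 ≤ χ 3 := by
      have e1 : χ 3 = Real.log ((a+3*u) * (1-u)^(3:ℕ)) - Real.log ((a-3*u) * (1+u)^(3:ℕ)) := by
        simp only [hχdef, hL]
        rw [Real.log_mul ha3.ne' (by positivity), Real.log_mul h3s.ne' (by positivity),
          Real.log_pow, Real.log_pow]
        push_cast
        ring
      rw [e1, sub_nonneg]
      exact Real.log_le_log (by positivity) hpoly
    have hχβ : 0 ≤ χ β :=
      le_trans hχ3 (hmono (Set.mem_Icc.2 ⟨le_refl 3, hβ⟩) (Set.mem_Icc.2 ⟨hβ, le_refl β⟩) hβ)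
    have e2 : χ β = Real.log ((1-u)^β * (a+β*u)) - Real.log ((1+u)^β * (a-β*u)) := by
      simp only [hχdef, hL]
      have hapos : (0:ℝ) < a + β*u := by nlinarith
      rw [Real.log_mul hQ.ne' hapos.ne', Real.log_mul hP.ne' hs.ne',
        Real.log_rpow h2u, Real.log_rpow h1u]
      ring
    rw [e2, sub_nonneg] at hχβ
    have hfin : (1+u)^β * (a-β*u) ≤ (1-u)^β * (a+β*u) := by
      have hapos : (0:ℝ) < a + β*u := by nlinarith
      exact (Real.log_le_log_iff (by positivity) (by positivity)).1 hχβ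
    nlinarith [hfin]


/-- Numerator of the auxiliary function `M`. -/
def Nm (α u : ℝ) : ℝ := (1+u)^(2*α-1) - (1-u)^(2*α-1)

/-- Denominator of the auxiliary function `M`. -/
def Dn (α u : ℝ) : ℝ := u * (1-u^2)^(α-2)

/-- The auxiliary function whose monotonicity encodes the key inequality. -/
def M (α u : ℝ) : ℝ := Nm α u / Dn α u

lemma hasDerivAt_Nm {α u : ℝ} (hu0 : 0 < u) (hu1 : u < 1) :
    HasDerivAt (Nm α) ((2*α-1)*((1+u)^(2*α-2) + (1-u)^(2*α-2))) u := by
  have h1 : (0:ℝ) < 1 + u := by linarith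
  have h2 : (0:ℝ) < 1 - u := by linarith
  have d1 : HasDerivAt (fun u : ℝ => (1+u)^(2*α-1)) ((2*α-1)*(1+u)^(2*α-2)) u := by
    have hin : HasDerivAt (fun u : ℝ => 1 + u) 1 u := by
      simpa using (hasDerivAt_id u).const_add (1:ℝ)
    have := hin.rpow_const (p := 2*α-1) (Or.inl h1.ne')
    have he : 2*α-1-1 = 2*α-2 := by ring
    rw [he] at this
    simpa using this
  have d2 : HasDerivAt (fun u : ℝ => (1-u)^(2*α-1)) (-((2*α-1)*(1-u)^(2*α-2))) u := by
    have hin : HasDerivAt (fun u : ℝ => 1 - u) (-1) u := by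
      simpa using (hasDerivAt_id u).const_sub (1:ℝ)
    have := hin.rpow_const (p := 2*α-1) (Or.inl h2.ne')
    have he : 2*α-1-1 = 2*α-2 := by ring
    rw [he] at this
    convert this using 1
    ring
  unfold Nm
  have e : (2*α-1)*((1+u)^(2*α-2) + (1-u)^(2*α-2))
      = (2*α-1)*(1+u)^(2*α-2) - -((2*α-1)*(1-u)^(2*α-2)) := by ring
  rw [e]
  exact d1.sub d2

lemma hasDerivAt_Dn {α u : ℝ} (hu0 : 0 < u) (hu1 : u < 1) :
    HasDerivAt (Dn α) ((1-u^2)^(α-2) + u*((α-2)*(1-u^2)^(α-3)*(-(2*u)))) u := by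
  have h4 : (0:ℝ) < 1 - u^2 := by nlinarith
  have hin : HasDerivAt (fun u : ℝ => 1 - u^2) (-(2*u)) u := by
    have := (hasDerivAt_pow 2 u).const_sub (1:ℝ)
    simpa using this
  have d := hin.rpow_const (p := α-2) (Or.inl h4.ne')
  have he : α-2-1 = α-3 := by ring
  rw [he] at d
  have hfull := (hasDerivAt_id u).mul d
  simp only [Pi.mul_def, id_eq, one_mul] at hfull
  unfold Dn
  exact hfull.congr_deriv (by ring)

lemma keyM {α u : ℝ} (hα : 2 ≤ α) (hu0 : 0 < u) (hu1 : u < 1) :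
    0 ≤ (2*α-1)*((1+u)^(2*α-2) + (1-u)^(2*α-2)) * Dn α u
      - Nm α u * ((1-u^2)^(α-2) + u*((α-2)*(1-u^2)^(α-3)*(-(2*u)))) := by
  have h1 : (0:ℝ) < 1 + u := by linarith
  have h2 : (0:ℝ) < 1 - u := by linarith
  have h4 : (0:ℝ) < 1 - u^2 := by nlinarith
  set P := (1+u)^(2*α-1) with hP
  set Q := (1-u)^(2*α-1) with hQ
  set R2 := (1+u)^(2*α-2) with hR2
  set S2 := (1-u)^(2*α-2) with hS2
  set T := (1-u^2)^(α-3) with hT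
  set D := (1-u^2)^(α-2) with hD
  have hDT : D = T * (1-u^2) := by
    rw [hD, hT, show α-2 = (α-3)+1 by ring, Real.rpow_add_one h4.ne']
  have hR : R2 * (1-u^2) = (1-u) * P := by
    rw [hR2, hP, show 2*α-1 = (2*α-2)+1 by ring, Real.rpow_add_one h1.ne']
    ring
  have hS : S2 * (1-u^2) = (1+u) * Q := by
    rw [hS2, hQ, show 2*α-1 = (2*α-2)+1 by ring, Real.rpow_add_one h2.ne']
    ring
  have hCI := CI hu0 hu1 (show (3:ℝ) ≤ 2*α-1 by linarith)
  have hT0 : 0 ≤ T := by rw [hT]; positivity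
  have main : (2*α-1)*(R2 + S2) * Dn α u
      - Nm α u * (D + u*((α-2)*T*(-(2*u))))
      = T * ((1+u)^(2*α-1) * ((2*α-1)*u - 1 - 2*u^2) + (1-u)^(2*α-1) * ((2*α-1)*u + 1 + 2*u^2)) := by
    rw [Nm, Dn, ← hP, ← hQ, ← hD]
    linear_combination ((2*α-1)*u*(R2+S2) - (P-Q)) * hDT + (2*α-1)*u*T*hR + (2*α-1)*u*T*hS
  rw [show (1-u^2)^(α-2) + u*((α-2)*(1-u^2)^(α-3)*(-(2*u))) = D + u*((α-2)*T*(-(2*u))) from rfl,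
    show (1+u)^(2*α-2) + (1-u)^(2*α-2) = R2 + S2 from rfl, main]
  exact mul_nonneg hT0 hCI

lemma Dn_pos {α u : ℝ} (hu0 : 0 < u) (hu1 : u < 1) : 0 < Dn α u := by
  have h4 : (0:ℝ) < 1 - u^2 := by nlinarith
  exact mul_pos hu0 (rpow_pos_of_pos h4 _)

lemma hasDerivAt_M {α u : ℝ} (hu0 : 0 < u) (hu1 : u < 1) :
    HasDerivAt (M α)
      (((2*α-1)*((1+u)^(2*α-2) + (1-u)^(2*α-2)) * Dn α u
        - Nm α u * ((1-u^2)^(α-2) + u*((α-2)*(1-u^2)^(α-3)*(-(2*u))))) / (Dn α u)^2) u :=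
  (hasDerivAt_Nm hu0 hu1).div (hasDerivAt_Dn hu0 hu1) (Dn_pos hu0 hu1).ne'

lemma M_mono {α : ℝ} (hα : 2 ≤ α) : MonotoneOn (M α) (Set.Ioo 0 1) := by
  apply monotoneOn_of_deriv_nonneg (convex_Ioo 0 1)
  · intro u hu
    exact (hasDerivAt_M hu.1 hu.2).continuousAt.continuousWithinAt
  · intro u hu
    rw [isOpen_Ioo.interior_eq] at hu
    exact (hasDerivAt_M hu.1 hu.2).differentiableAt.differentiableWithinAt
  · intro u hu
    rw [isOpen_Ioo.interior_eq] at hu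
    rw [(hasDerivAt_M hu.1 hu.2).deriv]
    exact div_nonneg (keyM hα hu.1 hu.2) (sq_nonneg _)

lemma PhiPsi {α t : ℝ} (ht0 : 0 ≤ t) (ht1 : t < 1) :
    ((1+t)^α + (1-t)^α) * ((1+t)^(α-1) - (1-t)^(α-1))
      = (1+t)^(2*α-1) - (1-t)^(2*α-1) - 2*t*(1-t^2)^(α-1) := by
  have h1 : (0:ℝ) < 1 + t := by linarith
  have h2 : (0:ℝ) < 1 - t := by linarith
  have ea : (1+t)^α * (1+t)^(α-1) = (1+t)^(2*α-1) := by
    rw [← Real.rpow_add h1]; congr 1; ring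
  have ed : (1-t)^α * (1-t)^(α-1) = (1-t)^(2*α-1) := by
    rw [← Real.rpow_add h2]; congr 1; ring
  have eb : (1+t)^α * (1-t)^(α-1) = (1+t) * (1-t^2)^(α-1) := by
    rw [show (1:ℝ)-t^2 = (1+t)*(1-t) by ring, Real.mul_rpow h1.le h2.le]
    rw [show (1+t)^α = (1+t)^(α-1) * (1+t) by
      rw [← Real.rpow_add_one h1.ne']; congr 1; ring]
    ring
  have ec : (1-t)^α * (1+t)^(α-1) = (1-t) * (1-t^2)^(α-1) := by
    rw [show (1:ℝ)-t^2 = (1+t)*(1-t) by ring, Real.mul_rpow h1.le h2.le]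
    rw [show (1-t)^α = (1-t)^(α-1) * (1-t) by
      rw [← Real.rpow_add_one h2.ne']; congr 1; ring]
    ring
  linear_combination ea - eb + ec - ed

lemma key0 {α u v w : ℝ} (hα : 2 ≤ α) (hu0 : 0 < u) (hu1 : u < 1)
    (hv0 : 0 ≤ v) (hv1 : v ≤ 1) (hw : w = u*v) :
    ((1+w)^α + (1-w)^α) * ((1+w)^(α-1) - (1-w)^(α-1)) * (1-u^2)^(α-2)
      ≤ v * (((1+u)^α + (1-u)^α) * ((1+u)^(α-1) - (1-u)^(α-1))) * (1-w^2)^(α-2) := by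
  have h4u : (0:ℝ) < 1 - u^2 := by nlinarith
  rcases eq_or_lt_of_le hv0 with hv | hv
  · subst hw
    rw [← hv]
    norm_num
  · have hw0 : 0 < w := by rw [hw]; positivity
    have hwu : w ≤ u := by rw [hw]; nlinarith
    have hw1 : w < 1 := lt_of_le_of_lt hwu hu1
    have h4w : (0:ℝ) < 1 - w^2 := by nlinarith
    have hM := M_mono hα (Set.mem_Ioo.2 ⟨hw0, hw1⟩) (Set.mem_Ioo.2 ⟨hu0, hu1⟩) hwu
    rw [M, M, div_le_div_iff₀ (Dn_pos hw0 hw1) (Dn_pos hu0 hu1)] at hM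
    rw [Dn, Dn] at hM
    -- divide by u
    have h1 : Nm α w * (1-u^2)^(α-2) ≤ v * Nm α u * (1-w^2)^(α-2) := by
      have h1' : u * (Nm α w * (1-u^2)^(α-2)) ≤ u * (v * Nm α u * (1-w^2)^(α-2)) := by
        calc u * (Nm α w * (1-u^2)^(α-2)) = Nm α w * (u * (1-u^2)^(α-2)) := by ring
        _ ≤ Nm α u * (w * (1-w^2)^(α-2)) := hM
        _ = u * (v * Nm α u * (1-w^2)^(α-2)) := by rw [hw]; ring
      exact le_of_mul_le_mul_left h1' hu0
    have ew : (1-w^2)^(α-1) = (1-w^2)^(α-2) * (1-w^2) := by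
      rw [show α-1 = (α-2)+1 by ring, Real.rpow_add_one h4w.ne']
    have eu : (1-u^2)^(α-1) = (1-u^2)^(α-2) * (1-u^2) := by
      rw [show α-1 = (α-2)+1 by ring, Real.rpow_add_one h4u.ne']
    have hbr2 : 0 ≤ 2*w*(1-w^2)^(α-1)*(1-u^2)^(α-2) - 2*u*v*(1-w^2)^(α-2)*(1-u^2)^(α-1) := by
      have e : 2*w*(1-w^2)^(α-1)*(1-u^2)^(α-2) - 2*u*v*(1-w^2)^(α-2)*(1-u^2)^(α-1)
          = 2*(1-w^2)^(α-2)*(1-u^2)^(α-2)*(w*(u^2-w^2)) := by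
        rw [ew, eu, hw]; ring
      rw [e]
      have : (0:ℝ) ≤ u^2 - w^2 := by nlinarith
      positivity
    rw [PhiPsi hw0.le hw1, PhiPsi hu0.le hu1]
    simp only [Nm] at h1
    linarith [h1, hbr2]


/-- `N(p) = p^α + (1-p)^α`. -/
def NN (α p : ℝ) : ℝ := p^α + (1-p)^α

/-- `A(p) = p^(α-1) - (1-p)^(α-1)`. -/
def AA (α p : ℝ) : ℝ := p^(α-1) - (1-p)^(α-1)

/-- First derivative of `kA α`. -/
def ff1 (α p : ℝ) : ℝ := NN α p ^ (1/α - 1) * AA α p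

/-- Second derivative of `kA α`. -/
def ff2 (α p : ℝ) : ℝ := (α-1) * NN α p ^ (1/α - 2) * (p*(1-p))^(α-2)

lemma NN_pos {α p : ℝ} (hp0 : 0 < p) (hp1 : p < 1) : 0 < NN α p :=
  add_pos (rpow_pos_of_pos hp0 α) (rpow_pos_of_pos (by linarith) α)

lemma hasDerivAt_NN {α p : ℝ} (hp0 : 0 < p) (hp1 : p < 1) :
    HasDerivAt (NN α) (α * AA α p) p := by
  have h2 : (0:ℝ) < 1 - p := by linarith
  have d1 : HasDerivAt (fun x : ℝ => x^α) (α * p^(α-1)) p :=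
    Real.hasDerivAt_rpow_const (Or.inl hp0.ne')
  have hin : HasDerivAt (fun p : ℝ => 1 - p) (-1) p := by
    simpa using (hasDerivAt_id p).const_sub (1:ℝ)
  have d2 := hin.rpow_const (p := α) (Or.inl h2.ne')
  unfold NN AA
  have e : α * (p^(α-1) - (1-p)^(α-1)) = α*p^(α-1) + (-1) * α * (1-p)^(α-1) := by ring
  rw [e]
  exact d1.add d2

lemma hasDerivAt_kA {α p : ℝ} (hα : 2 ≤ α) (hp0 : 0 < p) (hp1 : p < 1) :
    HasDerivAt (kA α) (ff1 α p) p := by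
  have hα0 : (0:ℝ) < α := by linarith
  have hN := NN_pos (α := α) hp0 hp1
  have d := (hasDerivAt_NN (α := α) hp0 hp1).rpow_const (p := 1/α) (Or.inl hN.ne')
  have e : α * AA α p * (1/α) * NN α p ^ (1/α - 1) = ff1 α p := by
    rw [ff1]
    field_simp
  rw [e] at d
  exact d

lemma hasDerivAt_AA {α p : ℝ} (hp0 : 0 < p) (hp1 : p < 1) :
    HasDerivAt (AA α) ((α-1) * (p^(α-2) + (1-p)^(α-2))) p := by
  have h2 : (0:ℝ) < 1 - p := by linarith
  have d1 : HasDerivAt (fun x : ℝ => x^(α-1)) ((α-1) * p^(α-2)) p := by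
    have := Real.hasDerivAt_rpow_const (x := p) (p := α-1) (Or.inl hp0.ne')
    rw [show α-1-1 = α-2 by ring] at this
    exact this
  have hin : HasDerivAt (fun p : ℝ => 1 - p) (-1) p := by
    simpa using (hasDerivAt_id p).const_sub (1:ℝ)
  have d2 := hin.rpow_const (p := α-1) (Or.inl h2.ne')
  rw [show α-1-1 = α-2 by ring] at d2
  unfold AA
  have e : (α-1) * (p^(α-2) + (1-p)^(α-2)) = (α-1)*p^(α-2) - (-1) * (α-1) * (1-p)^(α-2) := by
    ring
  rw [e]
  exact d1.sub d2

lemma NS_identity {α p : ℝ} (hp0 : 0 < p) (hp1 : p < 1) :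
    NN α p * (p^(α-2) + (1-p)^(α-2)) - AA α p ^ 2 = (p*(1-p))^(α-2) := by
  have h2 : (0:ℝ) < 1 - p := by linarith
  have ha1 : p^(α-1) = p^(α-2) * p := by
    rw [← Real.rpow_add_one hp0.ne']; congr 1; ring
  have ha0 : p^α = p^(α-2) * p * p := by
    rw [← Real.rpow_add_one hp0.ne' (α-2), ← Real.rpow_add_one hp0.ne' (α-2+1)]
    congr 1; ring
  have hb1 : (1-p)^(α-1) = (1-p)^(α-2) * (1-p) := by
    rw [← Real.rpow_add_one h2.ne']; congr 1; ring
  have hb0 : (1-p)^α = (1-p)^(α-2) * (1-p) * (1-p) := by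
    rw [← Real.rpow_add_one h2.ne' (α-2), ← Real.rpow_add_one h2.ne' (α-2+1)]
    congr 1; ring
  have hab : (p*(1-p))^(α-2) = p^(α-2) * (1-p)^(α-2) := Real.mul_rpow hp0.le h2.le
  unfold NN AA
  rw [ha0, hb0, ha1, hb1, hab]
  ring

lemma hasDerivAt_ff1 {α p : ℝ} (hα : 2 ≤ α) (hp0 : 0 < p) (hp1 : p < 1) :
    HasDerivAt (ff1 α) (ff2 α p) p := by
  have hα0 : (0:ℝ) < α := by linarith
  have hN := NN_pos (α := α) hp0 hp1
  have douter := (hasDerivAt_NN (α := α) hp0 hp1).rpow_const (p := 1/α - 1) (Or.inl hN.ne')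
  have dA := hasDerivAt_AA (α := α) hp0 hp1
  have hNe : NN α p ^ (1/α - 1) = NN α p ^ (1/α - 2) * NN α p := by
    rw [← Real.rpow_add_one hN.ne']; congr 1; ring
  have hprod := douter.mul dA
  have hval : α * AA α p * (1/α - 1) * NN α p ^ (1/α - 1 - 1) * AA α p
      + NN α p ^ (1/α - 1) * ((α-1) * (p^(α-2) + (1-p)^(α-2))) = ff2 α p := by
    rw [show 1/α - 1 - 1 = 1/α - 2 by ring, hNe, ff2, ← NS_identity hp0 hp1]
    field_simp
    ring
  rw [hval] at hprod
  exact hprod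

lemma AA_neg {α p : ℝ} (hα : 2 ≤ α) (hp0 : 0 < p) (hp : p < 1/2) : AA α p < 0 := by
  rw [AA, sub_neg]
  exact Real.rpow_lt_rpow hp0.le (by linarith) (by linarith)

lemma AA_nonpos {α p : ℝ} (hα : 2 ≤ α) (hp0 : 0 < p) (hp : p ≤ 1/2) : AA α p ≤ 0 := by
  rw [AA, sub_nonpos]
  exact Real.rpow_le_rpow hp0.le (by linarith) (by linarith)

lemma ff1_neg {α p : ℝ} (hα : 2 ≤ α) (hp0 : 0 < p) (hp : p < 1/2) : ff1 α p < 0 :=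
  mul_neg_of_pos_of_neg (rpow_pos_of_pos (NN_pos hp0 (by linarith)) _) (AA_neg hα hp0 hp)

lemma ff1_nonpos {α p : ℝ} (hα : 2 ≤ α) (hp0 : 0 < p) (hp : p ≤ 1/2) : ff1 α p ≤ 0 :=
  mul_nonpos_iff.2 (Or.inl ⟨(rpow_pos_of_pos (NN_pos hp0 (by linarith)) _).le,
    AA_nonpos hα hp0 hp⟩)

lemma ff2_nonneg {α p : ℝ} (hα : 2 ≤ α) (hp0 : 0 < p) (hp1 : p < 1) : 0 ≤ ff2 α p := by
  rw [ff2]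
  have h1 : (0:ℝ) ≤ α - 1 := by linarith
  have h2 : (0:ℝ) ≤ NN α p ^ (1/α - 2) := (rpow_pos_of_pos (NN_pos hp0 hp1) _).le
  have h3 : (0:ℝ) ≤ (p*(1-p))^(α-2) := Real.rpow_nonneg (by nlinarith) _
  positivity

lemma convN {α s t : ℝ} (h : s = (1-t)/2) (ht0 : 0 ≤ t) (ht1 : t < 1) :
    NN α s = ((1+t)^α + (1-t)^α) / 2^α := by
  subst h
  rw [NN, show (1:ℝ) - (1-t)/2 = (1+t)/2 by ring,
    Real.div_rpow (by linarith) (by norm_num), Real.div_rpow (by linarith) (by norm_num)]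
  ring

lemma convA {α s t : ℝ} (h : s = (1-t)/2) (ht0 : 0 ≤ t) (ht1 : t < 1) :
    AA α s = ((1-t)^(α-1) - (1+t)^(α-1)) / 2^(α-1) := by
  subst h
  rw [AA, show (1:ℝ) - (1-t)/2 = (1+t)/2 by ring,
    Real.div_rpow (by linarith) (by norm_num), Real.div_rpow (by linarith) (by norm_num)]
  ring

lemma convPP {α s t : ℝ} (h : s = (1-t)/2) (ht0 : 0 ≤ t) (ht1 : t < 1) :
    (s*(1-s))^(α-2) = (1-t^2)^(α-2) / 4^(α-2) := by
  subst h
  rw [show (1-t)/2 * (1 - (1-t)/2) = (1-t^2)/4 by ring,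
    Real.div_rpow (by nlinarith) (by norm_num)]

lemma key2 {α p q : ℝ} (hα : 2 ≤ α) (hp0 : 0 < p) (hp : p < 1/2)
    (hq0 : 0 ≤ q) (hq : q ≤ 1/2) :
    (1-2*q) * ((q+(1-2*q)*p)*(1-(q+(1-2*q)*p)))^(α-2) * NN α p * AA α p
      ≤ AA α (q+(1-2*q)*p) * NN α (q+(1-2*q)*p) * (p*(1-p))^(α-2) := by
  set c := q+(1-2*q)*p with hc
  set u := 1-2*p with hu
  set v := 1-2*q with hv
  set w := u*v with hw
  have hu0 : 0 < u := by rw [hu]; linarith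
  have hu1 : u < 1 := by rw [hu]; linarith
  have hv0 : 0 ≤ v := by rw [hv]; linarith
  have hv1 : v ≤ 1 := by rw [hv]; linarith
  have hw0 : 0 ≤ w := by rw [hw]; positivity
  have hw1 : w < 1 := by
    rw [hw]
    calc u * v ≤ u * 1 := by nlinarith
    _ < 1 := by linarith
  have hp_eq : p = (1-u)/2 := by rw [hu]; ring
  have hc_eq : c = (1-w)/2 := by rw [hc, hw, hu, hv]; ring
  have hKd : (0:ℝ) < 4^(α-2) * (2:ℝ)^α * (2:ℝ)^(α-1) := by positivity
  have h0 := key0 (α := α) hα hu0 hu1 hv0 hv1 hw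
  have eL : v * ((c*(1-c)))^(α-2) * NN α p * AA α p
      = -(v * (((1+u)^α + (1-u)^α) * ((1+u)^(α-1) - (1-u)^(α-1))) * (1-w^2)^(α-2))
        / (4^(α-2) * (2:ℝ)^α * (2:ℝ)^(α-1)) := by
    rw [convN hp_eq hu0.le hu1, convA hp_eq hu0.le hu1, convPP hc_eq hw0 hw1]
    field_simp
    ring
  have eR : AA α c * NN α c * (p*(1-p))^(α-2)
      = -((((1+w)^α + (1-w)^α) * ((1+w)^(α-1) - (1-w)^(α-1))) * (1-u^2)^(α-2))
        / (4^(α-2) * (2:ℝ)^α * (2:ℝ)^(α-1)) := by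
    rw [convN hc_eq hw0 hw1, convA hc_eq hw0 hw1, convPP hp_eq hu0.le hu1]
    field_simp
    ring
  rw [eL, eR, div_le_div_iff_of_pos_right hKd]
  have := neg_le_neg h0
  linarith

lemma key3 {α p q : ℝ} (hα : 2 ≤ α) (hp0 : 0 < p) (hp : p < 1/2)
    (hq0 : 0 ≤ q) (hq : q ≤ 1/2) :
    ff2 α (q+(1-2*q)*p) * (1-2*q) * ff1 α p - ff1 α (q+(1-2*q)*p) * ff2 α p ≤ 0 := by
  set c := q+(1-2*q)*p with hc
  have hp1 : p < 1 := by linarith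
  have hc0 : 0 < c := by
    rcases eq_or_lt_of_le hq0 with h | h
    · rw [hc, ← h]; norm_num; exact hp0
    · rw [hc]; nlinarith [mul_nonneg (by linarith : (0:ℝ) ≤ 1-2*q) hp0.le]
  have hc12 : c ≤ 1/2 := by
    rw [hc]; nlinarith [mul_nonneg (by linarith : (0:ℝ) ≤ 1-2*q) (by linarith : (0:ℝ) ≤ 1-2*p)]
  have hc1 : c < 1 := by linarith
  have hNp := NN_pos (α := α) hp0 hp1
  have hNc := NN_pos (α := α) hc0 hc1
  have h2 := key2 hα hp0 hp hq0 hq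
  rw [← hc] at h2
  have eNp : NN α p ^ (1/α - 1) = NN α p ^ (1/α - 2) * NN α p := by
    rw [← Real.rpow_add_one hNp.ne']; congr 1; ring
  have eNc : NN α c ^ (1/α - 1) = NN α c ^ (1/α - 2) * NN α c := by
    rw [← Real.rpow_add_one hNc.ne']; congr 1; ring
  have hfac : ff2 α c * (1-2*q) * ff1 α p - ff1 α c * ff2 α p
      = ((α-1) * NN α c ^ (1/α-2) * NN α p ^ (1/α-2))
        * ((1-2*q) * ((c*(1-c)))^(α-2) * NN α p * AA α p
            - AA α c * NN α c * (p*(1-p))^(α-2)) := by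
    rw [ff1, ff1, ff2, ff2, eNp, eNc]
    ring
  rw [hfac]
  apply mul_nonpos_iff.2
  left
  constructor
  · have h1 : (0:ℝ) ≤ α - 1 := by linarith
    positivity
  · linarith [h2]


section Plumb
variable {α : ℝ}

lemma alpha_pos (hα : 2 ≤ α) : (0:ℝ) < α := by linarith

lemma kA_zero (hα : 2 ≤ α) : kA α 0 = 1 := by
  rw [kA, Real.zero_rpow (by linarith : α ≠ 0)]
  norm_num

lemma kA_half (hα : 2 ≤ α) : kA α (1/2) = deltaA α := by
  have hα0 : (0:ℝ) < α := by linarith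
  rw [kA, deltaA, show (1:ℝ) - 1/2 = 1/2 by norm_num]
  have h1 : ((1:ℝ)/2)^α = ((2:ℝ)^α)⁻¹ := by
    rw [show (1:ℝ)/2 = 2⁻¹ by norm_num, Real.inv_rpow (by norm_num)]
  rw [h1]
  have h2 : ((2:ℝ)^α)⁻¹ + ((2:ℝ)^α)⁻¹ = 2^(1-α) := by
    rw [Real.rpow_sub (by norm_num : (0:ℝ) < 2), Real.rpow_one]
    have := Real.rpow_pos_of_pos (show (0:ℝ) < 2 by norm_num) α
    field_simp
    ring
  rw [h2, ← Real.rpow_mul (by norm_num : (0:ℝ) ≤ 2),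
    show (1-α)*(1/α) = (1-α)/α by ring]

lemma deltaA_pos (hα : 2 ≤ α) : 0 < deltaA α := Real.rpow_pos_of_pos (by norm_num) _

lemma deltaA_lt_one (hα : 2 ≤ α) : deltaA α < 1 := by
  apply Real.rpow_lt_one_of_one_lt_of_neg (by norm_num)
  apply div_neg_of_neg_of_pos (by linarith) (by linarith)

lemma cont_kA (hα : 2 ≤ α) : Continuous (kA α) := by
  have hα0 : (0:ℝ) < α := by linarith
  rw [continuous_iff_continuousAt]
  intro p
  have h1 : ContinuousAt (fun p : ℝ => p ^ α) p :=
    Real.continuousAt_rpow_const _ _ (Or.inr hα0.le)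
  have h2 : ContinuousAt (fun p : ℝ => (1-p) ^ α) p := by
    have hout := Real.continuousAt_rpow_const (1-p) α (Or.inr hα0.le)
    have hin : ContinuousAt (fun p : ℝ => 1 - p) p := by fun_prop
    exact hout.comp hin
  exact (Real.continuousAt_rpow_const _ _ (Or.inr (by positivity : (0:ℝ) ≤ 1/α))).comp
    (h1.add h2)

lemma kA_anti (hα : 2 ≤ α) : StrictAntiOn (kA α) (Icc 0 (1/2)) := by
  apply strictAntiOn_of_deriv_neg (convex_Icc 0 (1/2)) (cont_kA hα).continuousOn
  intro p hp
  rw [interior_Icc] at hp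
  rw [(hasDerivAt_kA hα hp.1 (by linarith [hp.2])).deriv]
  exact ff1_neg hα hp.1 hp.2

lemma kA_mem (hα : 2 ≤ α) {p : ℝ} (hp : p ∈ Icc 0 (1/2)) :
    kA α p ∈ Icc (deltaA α) 1 := by
  have h1 : kA α p ≤ kA α 0 :=
    (kA_anti hα).antitoneOn (by norm_num) hp hp.1
  have h2 : kA α (1/2) ≤ kA α p :=
    (kA_anti hα).antitoneOn hp (by norm_num) hp.2
  rw [kA_zero hα] at h1
  rw [kA_half hα] at h2
  exact ⟨h2, h1⟩

lemma kA_surj (hα : 2 ≤ α) {x : ℝ} (hx : x ∈ Icc (deltaA α) 1) :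
    ∃ p ∈ Icc (0:ℝ) (1/2), kA α p = x := by
  have hsub := intermediate_value_Icc' (by norm_num : (0:ℝ) ≤ 1/2) (cont_kA hα).continuousOn
  rw [kA_zero hα, kA_half hα] at hsub
  obtain ⟨p, hp, hpx⟩ := hsub hx
  exact ⟨p, hp, hpx⟩

lemma kAInv_left (hα : 2 ≤ α) {p : ℝ} (hp : p ∈ Icc (0:ℝ) (1/2)) :
    kAInv α (kA α p) = p :=
  (kA_anti hα).injOn.leftInvOn_invFunOn hp

lemma kAInv_right (hα : 2 ≤ α) {x : ℝ} (hx : x ∈ Icc (deltaA α) 1) :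
    kA α (kAInv α x) = x ∧ kAInv α x ∈ Icc (0:ℝ) (1/2) := by
  obtain ⟨p, hp, hpx⟩ := kA_surj hα hx
  exact ⟨Function.invFunOn_eq ⟨p, hp, hpx⟩, Function.invFunOn_mem ⟨p, hp, hpx⟩⟩

lemma kAInv_delta (hα : 2 ≤ α) : kAInv α (deltaA α) = 1/2 := by
  rw [← kA_half hα]
  exact kAInv_left hα (by norm_num)

lemma kAInv_one (hα : 2 ≤ α) : kAInv α 1 = 0 := by
  rw [← kA_zero hα]
  exact kAInv_left hα (by norm_num)

lemma kAInv_interior (hα : 2 ≤ α) {x : ℝ} (hx : x ∈ Ioo (deltaA α) 1) :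
    kAInv α x ∈ Ioo (0:ℝ) (1/2) := by
  have hxIcc : x ∈ Icc (deltaA α) 1 := ⟨hx.1.le, hx.2.le⟩
  obtain ⟨heq, hmem⟩ := kAInv_right hα hxIcc
  constructor
  · rcases lt_or_eq_of_le hmem.1 with h | h
    · exact h
    · exfalso
      rw [← h] at heq
      rw [kA_zero hα] at heq
      exact (ne_of_gt hx.2) heq
  · rcases lt_or_eq_of_le hmem.2 with h | h
    · exact h
    · exfalso
      rw [h] at heq
      rw [kA_half hα] at heq
      exact (ne_of_lt hx.1) heq

lemma kAInv_anti (hα : 2 ≤ α) : StrictAntiOn (kAInv α) (Icc (deltaA α) 1) := by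
  intro x hx x' hx' hlt
  obtain ⟨hex, hmx⟩ := kAInv_right hα hx
  obtain ⟨hex', hmx'⟩ := kAInv_right hα hx'
  by_contra hcon
  push_neg at hcon
  have := (kA_anti hα).antitoneOn hmx hmx' hcon
  rw [hex, hex'] at this
  exact absurd this (not_le_of_gt hlt)

lemma kAInv_image (hα : 2 ≤ α) : kAInv α '' (Icc (deltaA α) 1) = Icc (0:ℝ) (1/2) := by
  apply Set.Subset.antisymm
  · rintro _ ⟨x, hx, rfl⟩
    exact (kAInv_right hα hx).2
  · intro p hp
    exact ⟨kA α p, kA_mem hα hp, kAInv_left hα hp⟩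

lemma kAInv_contAt (hα : 2 ≤ α) {x : ℝ} (hx : x ∈ Ioo (deltaA α) 1) :
    ContinuousAt (kAInv α) x := by
  have hmono : StrictMonoOn (fun x => -(kAInv α x)) (Icc (deltaA α) 1) := by
    intro a ha b hb hab
    simp only [neg_lt_neg_iff]
    exact kAInv_anti hα ha hb hab
  have himg : (fun x => -(kAInv α x)) '' (Icc (deltaA α) 1) = Icc (-(1/2):ℝ) 0 := by
    have : (fun x => -(kAInv α x)) = (fun t : ℝ => -t) ∘ (kAInv α) := rfl
    rw [this, Set.image_comp, kAInv_image hα]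
    rw [Set.image_neg_eq_neg, Set.neg_Icc]
    norm_num
  have hc : ContinuousAt (fun x => -(kAInv α x)) x := by
    apply hmono.continuousAt_of_image_mem_nhds
    · exact Icc_mem_nhds hx.1 hx.2
    · rw [himg]
      have hmem := kAInv_interior hα hx
      exact Icc_mem_nhds (by linarith [hmem.2]) (by linarith [hmem.1])
  have : kAInv α = fun x => -(-(kAInv α x)) := by funext x; ring
  rw [this]
  exact hc.neg

lemma kAInv_contOn (hα : 2 ≤ α) : ContinuousOn (kAInv α) (Icc (deltaA α) 1) := by
  have hδ1 := deltaA_lt_one hα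
  have hmono : StrictMonoOn (fun x => -(kAInv α x)) (Icc (deltaA α) 1) := by
    intro a ha b hb hab
    simp only [neg_lt_neg_iff]
    exact kAInv_anti hα ha hb hab
  have himg : (fun x => -(kAInv α x)) '' (Icc (deltaA α) 1) = Icc (-(1/2):ℝ) 0 := by
    have : (fun x => -(kAInv α x)) = (fun t : ℝ => -t) ∘ (kAInv α) := rfl
    rw [this, Set.image_comp, kAInv_image hα]
    rw [Set.image_neg_eq_neg, Set.neg_Icc]
    norm_num
  have hneg : ContinuousOn (fun x => -(kAInv α x)) (Icc (deltaA α) 1) := by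
    intro x hx
    rcases eq_or_lt_of_le hx.1 with h1 | h1
    · -- x = deltaA α
      have hφx : -(kAInv α x) = -(1/2) := by rw [← h1, kAInv_delta hα]
      have hwr : ContinuousWithinAt (fun x => -(kAInv α x)) (Ici x) x := by
        apply hmono.continuousWithinAt_right_of_image_mem_nhdsWithin
        · rw [← h1]
          exact Icc_mem_nhdsGE_of_mem ⟨le_refl _, hδ1⟩
        · rw [himg, hφx]
          exact Icc_mem_nhdsGE_of_mem ⟨le_refl _, by norm_num⟩
      exact hwr.mono (by rw [← h1]; exact Icc_subset_Ici_self)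
    · rcases eq_or_lt_of_le hx.2 with h2 | h2
      · -- x = 1
        have hφx : -(kAInv α x) = 0 := by rw [h2, kAInv_one hα]; norm_num
        have hwl : ContinuousWithinAt (fun x => -(kAInv α x)) (Iic x) x := by
          apply hmono.continuousWithinAt_left_of_image_mem_nhdsWithin
          · rw [h2]
            exact Icc_mem_nhdsLE_of_mem ⟨hδ1, le_refl _⟩
          · rw [himg, hφx]
            exact Icc_mem_nhdsLE_of_mem ⟨by norm_num, le_refl _⟩
        exact hwl.mono (by rw [h2]; exact Icc_subset_Iic_self)
      · exact ((kAInv_contAt hα ⟨h1, h2⟩).neg).continuousWithinAt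
  have : kAInv α = fun x => -(-(kAInv α x)) := by funext x; ring
  rw [this]
  exact hneg.neg

lemma hasDerivAt_kAInv (hα : 2 ≤ α) {x : ℝ} (hx : x ∈ Ioo (deltaA α) 1) :
    HasDerivAt (kAInv α) (ff1 α (kAInv α x))⁻¹ x := by
  have hp := kAInv_interior hα hx
  apply HasDerivAt.of_local_left_inverse (kAInv_contAt hα hx)
    (hasDerivAt_kA hα hp.1 (by linarith [hp.2]))
    (ff1_neg hα hp.1 hp.2).ne
  filter_upwards [isOpen_Ioo.mem_nhds hx] with z hz
  exact (kAInv_right hα ⟨hz.1.le, hz.2.le⟩).1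

lemma c_bounds {q p : ℝ} (hp0 : 0 < p) (hp : p < 1/2) (hq0 : 0 ≤ q) (hq : q ≤ 1/2) :
    0 < q + (1-2*q)*p ∧ q + (1-2*q)*p ≤ 1/2 := by
  constructor
  · rcases eq_or_lt_of_le hq0 with h | h
    · rw [← h]; norm_num; exact hp0
    · nlinarith [mul_nonneg (by linarith : (0:ℝ) ≤ 1-2*q) hp0.le]
  · nlinarith [mul_nonneg (by linarith : (0:ℝ) ≤ 1-2*q) (by linarith : (0:ℝ) ≤ 1-2*p)]

/-- Ratio of derivatives. -/
def HH (α q : ℝ) : ℝ → ℝ := fun p => ff1 α (q + (1-2*q)*p) / ff1 α p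

lemma hasDerivAt_HH (hα : 2 ≤ α) {q p : ℝ} (hq0 : 0 ≤ q) (hq : q ≤ 1/2)
    (hp0 : 0 < p) (hp : p < 1/2) :
    HasDerivAt (HH α q)
      ((ff2 α (q+(1-2*q)*p) * (1-2*q) * ff1 α p - ff1 α (q+(1-2*q)*p) * ff2 α p)
        / (ff1 α p)^2) p := by
  have hc := c_bounds hp0 hp hq0 hq
  have hc1 : q + (1-2*q)*p < 1 := by linarith [hc.2]
  have hinner : HasDerivAt (fun p : ℝ => q + (1-2*q)*p) (1-2*q) p := by
    simpa using ((hasDerivAt_id p).const_mul (1-2*q)).const_add q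
  have hnum := (hasDerivAt_ff1 hα hc.1 hc1).comp p hinner
  have hden := hasDerivAt_ff1 hα hp0 (by linarith)
  have hne := (ff1_neg hα hp0 hp).ne
  exact hnum.div hden hne

lemma HH_anti (hα : 2 ≤ α) {q : ℝ} (hq0 : 0 ≤ q) (hq : q ≤ 1/2) :
    AntitoneOn (HH α q) (Ioo (0:ℝ) (1/2)) := by
  apply antitoneOn_of_deriv_nonpos (convex_Ioo 0 (1/2))
  · intro p hp
    exact (hasDerivAt_HH hα hq0 hq hp.1 hp.2).continuousAt.continuousWithinAt
  · intro p hp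
    rw [isOpen_Ioo.interior_eq] at hp
    exact (hasDerivAt_HH hα hq0 hq hp.1 hp.2).differentiableAt.differentiableWithinAt
  · intro p hp
    rw [isOpen_Ioo.interior_eq] at hp
    rw [(hasDerivAt_HH hα hq0 hq hp.1 hp.2).deriv]
    exact div_nonpos_iff.mpr (Or.inr ⟨key3 hα hp.1 hp.2 hq0 hq, sq_nonneg _⟩)

theorem main_conv {α : ℝ} (hα : 2 ≤ α) {y : ℝ} (hy : y ∈ IA α) :
    ConvexOn ℝ (IA α) (fun x => kkA α x y) := by
  have hδ1 := deltaA_lt_one hα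
  have hIA : IA α = Icc (deltaA α) 1 := by
    rw [IA, Set.uIcc_of_ge hδ1.le]
  rw [hIA] at hy ⊢
  set q := kAInv α y with hqdef
  have hq : q ∈ Icc (0:ℝ) (1/2) := (kAInv_right hα hy).2
  have hfun : (fun x => kkA α x y) = (fun x => kA α (q + (1-2*q) * kAInv α x)) := by
    funext x
    rw [kkA]
    congr 1
    rw [bconv]
    ring
  rw [hfun]
  have hgd : ∀ x ∈ Ioo (deltaA α) 1,
      HasDerivAt (fun x => kA α (q + (1-2*q) * kAInv α x))
        (ff1 α (q + (1-2*q) * kAInv α x) * ((1-2*q) * (ff1 α (kAInv α x))⁻¹)) x := by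
    intro x hx
    have hp := kAInv_interior hα hx
    have hdInv := hasDerivAt_kAInv hα hx
    have hinner : HasDerivAt (fun x => q + (1-2*q) * kAInv α x)
        ((1-2*q) * (ff1 α (kAInv α x))⁻¹) x := (hdInv.const_mul (1-2*q)).const_add q
    have hcb := c_bounds hp.1 hp.2 hq.1 hq.2
    exact (hasDerivAt_kA hα hcb.1 (by linarith [hcb.2])).comp x hinner
  apply MonotoneOn.convexOn_of_deriv (convex_Icc _ _)
  · apply (cont_kA hα).comp_continuousOn
    exact continuousOn_const.add (continuousOn_const.mul (kAInv_contOn hα))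
  · intro x hx
    rw [interior_Icc] at hx
    exact (hgd x hx).differentiableAt.differentiableWithinAt
  · intro x1 hx1 x2 hx2 hle
    rw [interior_Icc] at hx1 hx2
    rw [(hgd x1 hx1).deriv, (hgd x2 hx2).deriv]
    rcases eq_or_lt_of_le hle with heq | hlt
    · rw [heq]
    · have hp1 := kAInv_interior hα hx1
      have hp2 := kAInv_interior hα hx2
      have hple : kAInv α x2 < kAInv α x1 :=
        kAInv_anti hα ⟨hx1.1.le, hx1.2.le⟩ ⟨hx2.1.le, hx2.2.le⟩ hlt
      have hH := HH_anti hα hq.1 hq.2 hp2 hp1 hple.le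
      have hb0 : (0:ℝ) ≤ 1-2*q := by linarith [hq.2]
      have e1 : ff1 α (q + (1-2*q)*(kAInv α x1)) * ((1-2*q) * (ff1 α (kAInv α x1))⁻¹)
          = (1-2*q) * HH α q (kAInv α x1) := by
        simp only [HH, div_eq_mul_inv]
        ring
      have e2 : ff1 α (q + (1-2*q)*(kAInv α x2)) * ((1-2*q) * (ff1 α (kAInv α x2))⁻¹)
          = (1-2*q) * HH α q (kAInv α x2) := by
        simp only [HH, div_eq_mul_inv]
        ring
      rw [e1, e2]
      exact mul_le_mul_of_nonneg_left hH hb0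

end Plumb

end MGL3
end

/-- For `α ≥ 2`, `κ_α^A` is convex in each argument on `I_α^A`. -/
theorem stmt_3 (α : ℝ) (hα : 2 ≤ α) :
    (∀ y ∈ IA α, ConvexOn ℝ (IA α) (fun x => kkA α x y)) ∧
    (∀ x ∈ IA α, ConvexOn ℝ (IA α) (fun y => kkA α x y)) := by
  have main : ∀ y ∈ IA α, ConvexOn ℝ (IA α) (fun x => kkA α x y) :=
    fun y hy => MGL3.main_conv hα hy
  refine ⟨main, fun x hx => ?_⟩
  have hcomm : (fun y => kkA α x y) = (fun y => kkA α y x) := by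
    funext y
    rw [kkA, kkA]
    congr 1
    rw [bconv, bconv]
    ring
  rw [hcomm]
  exact main x hx
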